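/- Fix b ≥ 1, k ≥ 1, B ≥ 1 and P_b ∈ [0,1]. For j = 1,…,k let (X_j, Y_j) be i.i.d. pairs of random elements of {1,…,2^b} with P[X_j = Y_j] = P_b for each j. Let x, y ∈ {0,1}^{2^b·k} be the concatenations of the one-hot encodings of X_1,…,X_k and of Y_1,…,Y_k respectively, and let z, w be their count-sketches with B bins using shared randomness (h, r) independent of all (X_j, Y_j), where the r_i are i.i.d. symmetric Rademacher. Then E[⟨z,w⟩] = k·P_b and Var(⟨z,w⟩) = (1/B)·[k² + k²P_b² − kP_b² − kP_b] + kP_b(1−P_b). -/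

import Mathlib

open MeasureTheory ProbabilityTheory
open scoped ENNReal

/-- Count-sketch (with `B` bins, buckets `h`, signs `r`) of the concatenation of the
one-hot encodings of the `k` hash values `X_1, …, X_k ∈ Fin n`; the data vector is indexed
by `Fin k × Fin n` and its `(j', v)` entry is `1{X_{j'} = v}`:
`z_j = Σ_{(j',v)} 1{X_{j'} = v} · r_{(j',v)} · 1{h(j',v) = j}`. -/
noncomputable def oneHotSketch {Ω : Type*} {k n B : ℕ} (X : Fin k → Ω → Fin n)
    (h : Fin k × Fin n → Ω → Fin B) (r : Fin k × Fin n → Ω → ℝ) (j : Fin B) (ω : Ω) : ℝ :=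
  ∑ i : Fin k × Fin n, (if X i.1 ω = i.2 then 1 else 0) * r i ω * (if h i ω = j then 1 else 0)

section Aux
variable {Ω : Type*} [MeasurableSpace Ω] {P : Measure Ω} [IsProbabilityMeasure P]

lemma my_sum_ite_mul_ite {γ : Type*} [Fintype γ] [DecidableEq γ] (u v : γ) :
    (∑ x : γ, (if u = x then (1:ℝ) else 0) * (if v = x then 1 else 0)) = if u = v then 1 else 0 := by
  rw [Finset.sum_eq_single u]
  · simp [eq_comm]
  · intro j _ hj
    simp [Ne.symm hj]
  · simp

omit [IsProbabilityMeasure P] in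
lemma my_integral_ite (p : Ω → Prop) [DecidablePred p] (hp : MeasurableSet {ω | p ω}) :
    ∫ ω, (if p ω then (1:ℝ) else 0) ∂P = (P {ω | p ω}).toReal := by
  calc ∫ ω, (if p ω then (1:ℝ) else 0) ∂P
      = ∫ ω, {ω | p ω}.indicator (fun _ => (1:ℝ)) ω ∂P := by
        refine integral_congr_ae (Filter.Eventually.of_forall fun ω => ?_)
        by_cases h : p ω <;> simp [Set.indicator_apply, h]
    _ = (P {ω | p ω}).toReal := by rw [integral_indicator_const (1:ℝ) hp]; simp; rfl

lemma my_ae_pm {r : Ω → ℝ} (hrm : Measurable r)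
    (h1 : P {ω | r ω = 1} = 1/2) (h2 : P {ω | r ω = -1} = 1/2) :
    ∀ᵐ ω ∂P, r ω = 1 ∨ r ω = -1 := by
  have hA : MeasurableSet {ω | r ω = 1} := hrm (measurableSet_singleton 1)
  have hB : MeasurableSet {ω | r ω = -1} := hrm (measurableSet_singleton (-1))
  have hd : Disjoint {ω | r ω = 1} {ω | r ω = -1} := by
    rw [Set.disjoint_left]
    intro ω ha hb
    simp only [Set.mem_setOf_eq] at ha hb
    rw [ha] at hb; norm_num at hb
  have hu : P ({ω | r ω = 1} ∪ {ω | r ω = -1}) = 1 := by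
    rw [measure_union hd hB, h1, h2, ENNReal.add_halves]
  rw [ae_iff]
  have hset : {ω | ¬(r ω = 1 ∨ r ω = -1)} = ({ω | r ω = 1} ∪ {ω | r ω = -1})ᶜ := by
    ext ω; simp [Set.mem_union]
  rw [hset, measure_compl (hA.union hB) (measure_ne_top _ _), measure_univ, hu, tsub_self]

lemma my_integral_rademacher {r : Ω → ℝ} (hrm : Measurable r)
    (h1 : P {ω | r ω = 1} = 1/2) (h2 : P {ω | r ω = -1} = 1/2) :
    ∫ ω, r ω ∂P = 0 := by
  have hA : MeasurableSet {ω | r ω = 1} := hrm (measurableSet_singleton 1)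
  have hae := my_ae_pm hrm h1 h2 (P := P)
  have key : ∫ ω, r ω ∂P = ∫ ω, ({ω | r ω = 1}.indicator (fun _ => (2:ℝ)) ω - 1) ∂P := by
    refine integral_congr_ae ?_
    filter_upwards [hae] with ω hω
    rcases hω with h | h
    · simp [Set.indicator_apply, h]; norm_num
    · have h' : ¬ (r ω = 1) := by rw [h]; norm_num
      simp [Set.indicator_apply, h, h']; norm_num
  rw [key, integral_sub ((integrable_const (2:ℝ)).indicator hA) (integrable_const 1),
    integral_indicator_const (2:ℝ) hA, measureReal_def, h1, integral_const]
  norm_num [ENNReal.toReal_div]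

lemma my_integral_prod_iIndep {ι : Type*} {f : ι → Ω → ℝ}
    (hindep : iIndepFun f P) (hm : ∀ i, Measurable (f i))
    (s : Finset ι) : ∫ ω, ∏ i ∈ s, f i ω ∂P = ∏ i ∈ s, ∫ ω, f i ω ∂P := by
  classical
  induction s using Finset.induction_on with
  | empty => simp
  | @insert a s ha ih =>
    have hip : IndepFun (∏ i ∈ s, f i) (f a) P :=
      hindep.indepFun_finsetProd_of_notMem hm ha
    have hpm : Measurable (∏ i ∈ s, f i) := by
      rw [Finset.prod_fn]
      exact Finset.measurable_prod s fun i _ => hm i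
    have hmul := hip.symm.integral_mul_eq_mul_integral (hm a).aestronglyMeasurable hpm.aestronglyMeasurable
    have hfun : (f a * ∏ i ∈ s, f i) = fun ω => f a ω * ∏ i ∈ s, f i ω :=
      funext fun ω => by simp [Finset.prod_apply]
    rw [hfun, Finset.prod_fn] at hmul
    simp only [Finset.prod_insert ha, ← ih]
    exact hmul

lemma my_even_four {α : Type*} [DecidableEq α] (i1 i1' i2 i2' : α)
    (hm : ∀ x : α, Even ((if i1 = x then 1 else 0) + (if i1' = x then 1 else 0)
      + (if i2 = x then 1 else 0) + (if i2' = x then 1 else 0) : ℕ)) :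
    (i1 = i1' ∧ i2 = i2') ∨ (i1 = i2 ∧ i1' = i2') ∨ (i1 = i2' ∧ i1' = i2) := by
  by_cases h11 : i1 = i1'
  · by_cases h22 : i2 = i2'
    · exact Or.inl ⟨h11, h22⟩
    · exfalso
      have H := hm i2
      rw [Nat.even_iff] at H
      subst h11
      split_ifs at H with ha hb hc <;> first | omega | exact h22 (by tauto)
  · have H1 := hm i1
    rw [Nat.even_iff] at H1
    rw [if_pos rfl, if_neg (fun hh => h11 hh.symm)] at H1
    by_cases h21 : i2 = i1
    · rw [if_pos h21] at H1
      have h2'1 : ¬ (i2' = i1) := by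
        intro hc; rw [if_pos hc] at H1; omega
      have H2 := hm i1'
      rw [Nat.even_iff] at H2
      rw [if_neg h11, if_pos rfl, if_neg (fun hh : i2 = i1' => h11 (h21.symm.trans hh))] at H2
      by_cases h2'1' : i2' = i1'
      · exact Or.inr (Or.inl ⟨h21.symm, h2'1'.symm⟩)
      · rw [if_neg h2'1'] at H2; omega
    · rw [if_neg h21] at H1
      by_cases h2'1 : i2' = i1
      · rw [if_pos h2'1] at H1
        have H2 := hm i1'
        rw [Nat.even_iff] at H2
        rw [if_neg h11, if_pos rfl, if_neg (fun hh : i2' = i1' => h11 (h2'1.symm.trans hh))] at H2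
        by_cases h21' : i2 = i1'
        · exact Or.inr (Or.inr ⟨h2'1.symm, h21'.symm⟩)
        · rw [if_neg h21'] at H2; omega
      · rw [if_neg h2'1] at H1; omega

lemma my_sum_ite_const {γ : Type*} [Fintype γ] (c : Prop) [Decidable c] (f : γ → ℝ) :
    (∑ x : γ, if c then f x else 0) = if c then ∑ x, f x else 0 := by
  by_cases h : c <;> simp [h]

lemma my_ite_not_eq {γ : Type*} [DecidableEq γ] (a b : γ) (x : ℝ) :
    (if ¬ a = b then x else 0) = x - (if a = b then x else 0) := by
  by_cases h : a = b <;> simp [h]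

end Aux

section Alg
variable {Ω : Type*} {k n B : ℕ}

def aF (X : Fin k → Ω → Fin n) (i : Fin k × Fin n) (ω : Ω) : ℝ :=
  if X i.1 ω = i.2 then 1 else 0

def dF (h : Fin k × Fin n → Ω → Fin B) (i i' : Fin k × Fin n) (ω : Ω) : ℝ :=
  if h i ω = h i' ω then 1 else 0

noncomputable def tF (X Y : Fin k → Ω → Fin n) (h : Fin k × Fin n → Ω → Fin B)
    (r : Fin k × Fin n → Ω → ℝ) (p : (Fin k × Fin n) × (Fin k × Fin n)) (ω : Ω) : ℝ :=
  aF X p.1 ω * aF Y p.2 ω * (r p.1 ω * r p.2 ω) * dF h p.1 p.2 ω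

lemma sketch_expand (X Y : Fin k → Ω → Fin n) (h : Fin k × Fin n → Ω → Fin B)
    (r : Fin k × Fin n → Ω → ℝ) (ω : Ω) :
    (∑ j, oneHotSketch X h r j ω * oneHotSketch Y h r j ω)
      = ∑ p : (Fin k × Fin n) × (Fin k × Fin n), tF X Y h r p ω := by
  classical
  have step1 : ∀ j : Fin B, oneHotSketch X h r j ω * oneHotSketch Y h r j ω
      = ∑ i : Fin k × Fin n, ∑ i' : Fin k × Fin n,
        aF X i ω * aF Y i' ω * (r i ω * r i' ω)
          * ((if h i ω = j then (1:ℝ) else 0) * (if h i' ω = j then 1 else 0)) := by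
    intro j
    unfold oneHotSketch
    rw [Finset.sum_mul_sum]
    refine Finset.sum_congr rfl fun i _ => Finset.sum_congr rfl fun i' _ => ?_
    unfold aF
    ring
  calc (∑ j, oneHotSketch X h r j ω * oneHotSketch Y h r j ω)
      = ∑ i : Fin k × Fin n, ∑ i' : Fin k × Fin n,
          aF X i ω * aF Y i' ω * (r i ω * r i' ω)
            * ∑ j : Fin B, ((if h i ω = j then (1:ℝ) else 0) * (if h i' ω = j then 1 else 0)) := by
        simp only [step1]
        rw [Finset.sum_comm]
        refine Finset.sum_congr rfl fun i _ => ?_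
        rw [Finset.sum_comm]
        refine Finset.sum_congr rfl fun i' _ => ?_
        rw [Finset.mul_sum]
    _ = ∑ i : Fin k × Fin n, ∑ i' : Fin k × Fin n, tF X Y h r (i, i') ω := by
        refine Finset.sum_congr rfl fun i _ => Finset.sum_congr rfl fun i' _ => ?_
        rw [my_sum_ite_mul_ite]
        rfl
    _ = ∑ p : (Fin k × Fin n) × (Fin k × Fin n), tF X Y h r p ω := by
        exact (Fintype.sum_prod_type fun p => tF X Y h r p ω).symm

lemma sum_aF (X : Fin k → Ω → Fin n) (ω : Ω) :
    ∑ i : Fin k × Fin n, aF X i ω = k := by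
  classical
  rw [Fintype.sum_prod_type]
  unfold aF
  simp

lemma sum_aF_mul (X Y : Fin k → Ω → Fin n) (ω : Ω) :
    ∑ i : Fin k × Fin n, aF X i ω * aF Y i ω
      = ∑ j : Fin k, (if X j ω = Y j ω then (1:ℝ) else 0) := by
  classical
  rw [Fintype.sum_prod_type]
  refine Finset.sum_congr rfl fun j _ => ?_
  unfold aF
  exact my_sum_ite_mul_ite (X j ω) (Y j ω)

end Alg


/-- with `k` i.i.d. pairs `(X_j, Y_j)` of `b`-bit hash values with per-pair
collision probability `P_b`, one-hot encoded and count-sketched with `B` bins via shared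
randomness `(h, r)` (i.i.d. uniform buckets, i.i.d. symmetric Rademacher signs, mutually
independent and independent of all `(X_j, Y_j)`):
`E[⟨z,w⟩] = k·P_b` and `Var(⟨z,w⟩) = (1/B)·[k² + k²P_b² - kP_b² - kP_b] + kP_b(1-P_b)`. -/
theorem gcws_countSketch_mean_variance {Ω : Type*} [MeasurableSpace Ω] (P : Measure Ω)
    [IsProbabilityMeasure P] (b k B : ℕ) (hb : 1 ≤ b) (hk : 1 ≤ k) (hB : 1 ≤ B)
    (Pb : ℝ) (hPb0 : 0 ≤ Pb) (hPb1 : Pb ≤ 1)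
    (X Y : Fin k → Ω → Fin (2 ^ b))
    (hXm : ∀ j, Measurable (X j)) (hYm : ∀ j, Measurable (Y j))
    (hpairs_indep : iIndepFun (fun j ω => (X j ω, Y j ω)) P)
    (hpairs_ident : ∀ j j', IdentDistrib (fun ω => (X j ω, Y j ω))
      (fun ω => (X j' ω, Y j' ω)) P P)
    (hcollision : ∀ j, P {ω | X j ω = Y j ω} = ENNReal.ofReal Pb)
    (h : Fin k × Fin (2 ^ b) → Ω → Fin B) (r : Fin k × Fin (2 ^ b) → Ω → ℝ)
    (hhm : ∀ i, Measurable (h i)) (hrm : ∀ i, Measurable (r i))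
    (hunif : ∀ i, ∀ j : Fin B, P {ω | h i ω = j} = (B : ℝ≥0∞)⁻¹)
    (hhiid : iIndepFun h P)
    (hriid : iIndepFun r P)
    (hrad : ∀ i, P {ω | r i ω = 1} = 1 / 2 ∧ P {ω | r i ω = -1} = 1 / 2)
    (hhr : IndepFun (fun ω i => h i ω) (fun ω i => r i ω) P)
    (hsk_XY : IndepFun (fun ω => (fun i => h i ω, fun i => r i ω))
      (fun ω => fun j => (X j ω, Y j ω)) P) :
    ∫ ω, (∑ j, oneHotSketch X h r j ω * oneHotSketch Y h r j ω) ∂P = k * Pb ∧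
      variance (fun ω => ∑ j, oneHotSketch X h r j ω * oneHotSketch Y h r j ω) P
        = (1 / B) * ((k : ℝ) ^ 2 + (k : ℝ) ^ 2 * Pb ^ 2 - (k : ℝ) * Pb ^ 2 - (k : ℝ) * Pb)
          + (k : ℝ) * Pb * (1 - Pb) := by
  classical
  have hBne : (B : ℝ) ≠ 0 := Nat.cast_ne_zero.2 (by omega)
  -- ae facts about the signs
  have hrae : ∀ i, ∀ᵐ ω ∂P, r i ω = 1 ∨ r i ω = -1 :=
    fun i => my_ae_pm (hrm i) (hrad i).1 (hrad i).2
  have hrae_all : ∀ᵐ ω ∂P, ∀ i, r i ω = 1 ∨ r i ω = -1 := ae_all_iff.2 hrae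
  have hrint : ∀ i, ∫ ω, r i ω ∂P = 0 :=
    fun i => my_integral_rademacher (hrm i) (hrad i).1 (hrad i).2
  -- measurability
  have hmA : ∀ i : Fin k × Fin (2^b), Measurable (aF X i) := fun i =>
    Measurable.ite ((hXm i.1) (measurableSet_singleton i.2)) measurable_const measurable_const
  have hmC : ∀ i : Fin k × Fin (2^b), Measurable (aF Y i) := fun i =>
    Measurable.ite ((hYm i.1) (measurableSet_singleton i.2)) measurable_const measurable_const
  have hmD : ∀ i i' : Fin k × Fin (2^b), Measurable (dF h i i') := fun i i' =>
    Measurable.ite (measurableSet_eq_fun (hhm i) (hhm i'))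
      measurable_const measurable_const
  have hmT : ∀ p : (Fin k × Fin (2^b)) × (Fin k × Fin (2^b)), Measurable (tF X Y h r p) :=
    fun p => (((hmA p.1).mul (hmC p.2)).mul ((hrm p.1).mul (hrm p.2))).mul (hmD p.1 p.2)
  -- generic integrability for bounded measurable functions
  have hBddInt : ∀ (f : Ω → ℝ) (C : ℝ), Measurable f → (∀ᵐ ω ∂P, |f ω| ≤ C) → Integrable f P :=
    fun f C hf hb => (integrable_const C).mono' hf.aestronglyMeasurable hb
  have haeT : ∀ p : (Fin k × Fin (2^b)) × (Fin k × Fin (2^b)),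
      ∀ᵐ ω ∂P, |tF X Y h r p ω| ≤ 1 := by
    intro p
    filter_upwards [hrae p.1, hrae p.2] with ω h1 h2
    have hr1 : |r p.1 ω| = 1 := by rcases h1 with h|h <;> simp [h]
    have hr2 : |r p.2 ω| = 1 := by rcases h2 with h|h <;> simp [h]
    have key : |tF X Y h r p ω|
        = |aF X p.1 ω| * |aF Y p.2 ω| * (|r p.1 ω| * |r p.2 ω|) * |dF h p.1 p.2 ω| := by
      unfold tF; rw [abs_mul, abs_mul, abs_mul, abs_mul]
    rw [key, hr1, hr2]
    unfold aF dF
    split_ifs <;> norm_num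
  have hTint : ∀ p, Integrable (tF X Y h r p) P := fun p => hBddInt _ 1 (hmT p) (haeT p)
  have hTTint : ∀ p q, Integrable (fun ω => tF X Y h r p ω * tF X Y h r q ω) P := by
    intro p q
    refine hBddInt _ 1 ((hmT p).mul (hmT q)) ?_
    filter_upwards [haeT p, haeT q] with ω h1 h2
    rw [abs_mul]
    nlinarith [abs_nonneg (tF X Y h r p ω), abs_nonneg (tF X Y h r q ω)]
  have hACint : ∀ i i' : Fin k × Fin (2^b), Integrable (fun ω => aF X i ω * aF Y i' ω) P := by
    intro i i'
    refine hBddInt _ 1 ((hmA i).mul (hmC i')) (Filter.Eventually.of_forall fun ω => ?_)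
    unfold aF
    rw [abs_mul]
    split_ifs <;> norm_num
  have hACACint : ∀ i1 i1' i2 i2' : Fin k × Fin (2^b),
      Integrable (fun ω => aF X i1 ω * aF Y i1' ω * (aF X i2 ω * aF Y i2' ω)) P := by
    intro i1 i1' i2 i2'
    refine hBddInt _ 1 (((hmA i1).mul (hmC i1')).mul ((hmA i2).mul (hmC i2')))
      (Filter.Eventually.of_forall fun ω => ?_)
    unfold aF
    rw [abs_mul, abs_mul, abs_mul]
    split_ifs <;> norm_num
  -- the triple factorization over (h, r, (X,Y))
  have factor3 : ∀ (F : ((Fin k × Fin (2^b)) → Fin B) → ℝ) (G : ((Fin k × Fin (2^b)) → ℝ) → ℝ)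
      (K : (Fin k → Fin (2^b) × Fin (2^b)) → ℝ), Measurable G →
      ∫ ω, F (fun i => h i ω) * G (fun i => r i ω) * K (fun j => (X j ω, Y j ω)) ∂P
        = (∫ ω, F (fun i => h i ω) ∂P) * ((∫ ω, G (fun i => r i ω) ∂P)
          * (∫ ω, K (fun j => (X j ω, Y j ω)) ∂P)) := by
    intro F G K hG
    have hFm : Measurable F := measurable_of_countable F
    have hKm : Measurable K := measurable_of_countable K
    have hHm : Measurable fun ω (i : Fin k × Fin (2^b)) => h i ω :=
      measurable_pi_lambda _ hhm
    have hRm : Measurable fun ω (i : Fin k × Fin (2^b)) => r i ω :=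
      measurable_pi_lambda _ hrm
    have hWm : Measurable fun ω (j : Fin k) => (X j ω, Y j ω) :=
      measurable_pi_lambda _ fun j => (hXm j).prodMk (hYm j)
    have hFG : IndepFun (fun ω => F (fun i => h i ω) * G (fun i => r i ω))
        (fun ω => K (fun j => (X j ω, Y j ω))) P :=
      hsk_XY.comp (φ := fun pr : ((Fin k × Fin (2^b)) → Fin B) × ((Fin k × Fin (2^b)) → ℝ)
        => F pr.1 * G pr.2) (ψ := K)
        ((hFm.comp measurable_fst).mul (hG.comp measurable_snd)) hKm
    have hF_G : IndepFun (fun ω => F (fun i => h i ω)) (fun ω => G (fun i => r i ω)) P :=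
      hhr.comp hFm hG
    have e1 : ∫ ω, (F (fun i => h i ω) * G (fun i => r i ω)) * K (fun j => (X j ω, Y j ω)) ∂P
        = (∫ ω, F (fun i => h i ω) * G (fun i => r i ω) ∂P)
          * ∫ ω, K (fun j => (X j ω, Y j ω)) ∂P :=
      hFG.integral_mul_eq_mul_integral (((hFm.comp hHm).mul (hG.comp hRm)).aestronglyMeasurable)
        ((hKm.comp hWm).aestronglyMeasurable)
    have e2 : ∫ ω, F (fun i => h i ω) * G (fun i => r i ω) ∂P
        = (∫ ω, F (fun i => h i ω) ∂P) * ∫ ω, G (fun i => r i ω) ∂P :=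
      hF_G.integral_mul_eq_mul_integral ((hFm.comp hHm).aestronglyMeasurable) ((hG.comp hRm).aestronglyMeasurable)
    rw [e1, e2, mul_assoc]
  -- bucket collision probability
  have hD1 : ∀ i i' : Fin k × Fin (2^b), i ≠ i' →
      ∫ ω, dF h i i' ω ∂P = (B:ℝ)⁻¹ := by
    intro i i' hne
    have hj : ∀ j : Fin B, ∫ ω, (if h i ω = j then (1:ℝ) else 0)
        * (if h i' ω = j then 1 else 0) ∂P = (B:ℝ)⁻¹ * (B:ℝ)⁻¹ := by
      intro j
      have hcomp : IndepFun (fun ω => if h i ω = j then (1:ℝ) else 0)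
          (fun ω => if h i' ω = j then (1:ℝ) else 0) P :=
        (hhiid.indepFun hne).comp (φ := fun x : Fin B => if x = j then (1:ℝ) else 0)
          (ψ := fun x : Fin B => if x = j then (1:ℝ) else 0)
          (measurable_of_countable _) (measurable_of_countable _)
      have e : ∫ ω, (if h i ω = j then (1:ℝ) else 0) * (if h i' ω = j then 1 else 0) ∂P
          = (∫ ω, (if h i ω = j then (1:ℝ) else 0) ∂P)
            * ∫ ω, (if h i' ω = j then (1:ℝ) else 0) ∂P :=
        hcomp.integral_mul_eq_mul_integral
          (((measurable_of_countable (fun x : Fin B => if x = j then (1:ℝ) else 0)).comp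
            (hhm i)).aestronglyMeasurable)
          (((measurable_of_countable (fun x : Fin B => if x = j then (1:ℝ) else 0)).comp
            (hhm i')).aestronglyMeasurable)
      rw [e, my_integral_ite (fun ω => h i ω = j) (by exact (hhm i) (measurableSet_singleton j)),
        my_integral_ite (fun ω => h i' ω = j) (by exact (hhm i') (measurableSet_singleton j)),
        hunif i j, hunif i' j]
      simp
    calc ∫ ω, dF h i i' ω ∂P
        = ∫ ω, ∑ j : Fin B, (if h i ω = j then (1:ℝ) else 0)
            * (if h i' ω = j then 1 else 0) ∂P := by
          refine integral_congr_ae (Filter.Eventually.of_forall fun ω => ?_)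
          unfold dF
          exact (my_sum_ite_mul_ite (h i ω) (h i' ω)).symm
      _ = ∑ j : Fin B, ∫ ω, (if h i ω = j then (1:ℝ) else 0)
            * (if h i' ω = j then 1 else 0) ∂P := by
          refine integral_finset_sum _ fun j _ => ?_
          refine hBddInt _ 1 (((measurable_of_countable (fun x : Fin B => if x = j then (1:ℝ) else 0)).comp
            (hhm i)).mul ((measurable_of_countable (fun x : Fin B => if x = j then (1:ℝ) else 0)).comp
            (hhm i'))) (Filter.Eventually.of_forall fun ω => ?_)
          rw [abs_mul]
          split_ifs <;> norm_num
      _ = ∑ _j : Fin B, (B:ℝ)⁻¹ * (B:ℝ)⁻¹ := Finset.sum_congr rfl fun j _ => hj j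
      _ = (B:ℝ)⁻¹ := by
          rw [Finset.sum_const, Finset.card_univ, Fintype.card_fin, nsmul_eq_mul]
          field_simp
  -- sign moments
  have hr_one : ∀ x y : Fin k × Fin (2^b), ∫ ω, r x ω * r x ω * (r y ω * r y ω) ∂P = 1 := by
    intro x y
    have : ∀ᵐ ω ∂P, r x ω * r x ω * (r y ω * r y ω) = 1 := by
      filter_upwards [hrae x, hrae y] with ω h1 h2
      rcases h1 with h|h <;> rcases h2 with h'|h' <;> rw [h, h'] <;> norm_num
    rw [integral_congr_ae this]
    simp
  have hr_one2 : ∀ x y : Fin k × Fin (2^b), ∫ ω, r x ω * r y ω * (r x ω * r y ω) ∂P = 1 := by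
    intro x y
    have : ∀ᵐ ω ∂P, r x ω * r y ω * (r x ω * r y ω) = 1 := by
      filter_upwards [hrae x, hrae y] with ω h1 h2
      rcases h1 with h|h <;> rcases h2 with h'|h' <;> rw [h, h'] <;> norm_num
    rw [integral_congr_ae this]
    simp
  have hr_one3 : ∀ x y : Fin k × Fin (2^b), ∫ ω, r x ω * r y ω * (r y ω * r x ω) ∂P = 1 := by
    intro x y
    have : ∀ᵐ ω ∂P, r x ω * r y ω * (r y ω * r x ω) = 1 := by
      filter_upwards [hrae x, hrae y] with ω h1 h2
      rcases h1 with h|h <;> rcases h2 with h'|h' <;> rw [h, h'] <;> norm_num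
    rw [integral_congr_ae this]
    simp
  have hr_zero2 : ∀ x y : Fin k × Fin (2^b), x ≠ y → ∫ ω, r x ω * r y ω ∂P = 0 := by
    intro x y hne
    have e : ∫ ω, r x ω * r y ω ∂P = (∫ ω, r x ω ∂P) * ∫ ω, r y ω ∂P :=
      (hriid.indepFun hne).integral_mul_eq_mul_integral (hrm x).aestronglyMeasurable (hrm y).aestronglyMeasurable
    rw [e, hrint x, zero_mul]
  -- odd sign moments vanish
  have hodd : ∀ i1 i1' i2 i2' : Fin k × Fin (2^b),
      ¬((i1 = i1' ∧ i2 = i2') ∨ (i1 = i2 ∧ i1' = i2') ∨ (i1 = i2' ∧ i1' = i2)) →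
      ∫ ω, r i1 ω * r i1' ω * (r i2 ω * r i2' ω) ∂P = 0 := by
    intro i1 i1' i2 i2' hnot
    set m : Fin k × Fin (2^b) → ℕ := fun x => (if i1 = x then 1 else 0)
      + (if i1' = x then 1 else 0) + (if i2 = x then 1 else 0) + (if i2' = x then 1 else 0)
      with hmdef
    have hone : ∀ (z : Fin k × Fin (2^b)) (ω : Ω),
        (∏ x : Fin k × Fin (2^b), r x ω ^ (if z = x then 1 else 0)) = r z ω := by
      intro z ω
      rw [show (fun x => r x ω ^ (if z = x then 1 else 0))
          = fun x => (if z = x then r x ω else 1) from funext fun x => by split_ifs <;> simp]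
      simp
    have hpt : ∀ ω, r i1 ω * r i1' ω * (r i2 ω * r i2' ω)
        = ∏ x : Fin k × Fin (2^b), r x ω ^ m x := by
      intro ω
      have : (fun x => r x ω ^ m x) = fun x =>
          (r x ω ^ (if i1 = x then 1 else 0)) * (r x ω ^ (if i1' = x then 1 else 0))
          * (r x ω ^ (if i2 = x then 1 else 0)) * (r x ω ^ (if i2' = x then 1 else 0)) := by
        funext x
        rw [hmdef]
        rw [← pow_add, ← pow_add, ← pow_add]
      rw [this, Finset.prod_mul_distrib, Finset.prod_mul_distrib, Finset.prod_mul_distrib,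
        hone, hone, hone, hone]
      ring
    have hfact : ∫ ω, ∏ x : Fin k × Fin (2^b), r x ω ^ m x ∂P
        = ∏ x : Fin k × Fin (2^b), ∫ ω, r x ω ^ m x ∂P :=
      my_integral_prod_iIndep
        (hriid.comp (fun x t => t ^ m x) (fun x => measurable_id.pow_const (m x)))
        (fun x => (hrm x).pow_const (m x)) Finset.univ
    have hoddx : ∃ x : Fin k × Fin (2^b), ¬ Even (m x) := by
      by_contra hall
      push_neg at hall
      exact hnot (my_even_four i1 i1' i2 i2' fun x => by simpa using hall x)
    obtain ⟨x₀, hx₀⟩ := hoddx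
    have hzero : ∫ ω, r x₀ ω ^ m x₀ ∂P = 0 := by
      have hoddm : Odd (m x₀) := Nat.not_even_iff_odd.1 hx₀
      have hc : ∀ᵐ ω ∂P, r x₀ ω ^ m x₀ = r x₀ ω := by
        filter_upwards [hrae x₀] with ω hω
        rcases hω with hh|hh <;> rw [hh]
        · rw [one_pow]
        · rw [hoddm.neg_one_pow]
      rw [integral_congr_ae hc, hrint x₀]
    calc ∫ ω, r i1 ω * r i1' ω * (r i2 ω * r i2' ω) ∂P
        = ∫ ω, ∏ x : Fin k × Fin (2^b), r x ω ^ m x ∂P :=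
          integral_congr_ae (Filter.Eventually.of_forall hpt)
      _ = ∏ x : Fin k × Fin (2^b), ∫ ω, r x ω ^ m x ∂P := hfact
      _ = 0 := Finset.prod_eq_zero (Finset.mem_univ x₀) hzero
  -- XY-side integrals
  have hsetXY : ∀ j : Fin k, MeasurableSet {ω | X j ω = Y j ω} :=
    fun j => measurableSet_eq_fun (hXm j) (hYm j)
  have hXiInt : ∀ j : Fin k, ∫ ω, (if X j ω = Y j ω then (1:ℝ) else 0) ∂P = Pb := by
    intro j
    rw [my_integral_ite (fun ω => X j ω = Y j ω) (hsetXY j), hcollision j,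
      ENNReal.toReal_ofReal hPb0]
  have hXiMeas : ∀ j : Fin k, Measurable (fun ω => if X j ω = Y j ω then (1:ℝ) else 0) :=
    fun j => Measurable.ite (hsetXY j) measurable_const measurable_const
  have hXiIntg : ∀ j : Fin k, Integrable (fun ω => if X j ω = Y j ω then (1:ℝ) else 0) P := by
    intro j
    refine hBddInt _ 1 (hXiMeas j) (Filter.Eventually.of_forall fun ω => ?_)
    split_ifs <;> norm_num
  have hXiXj : ∀ j j' : Fin k, j ≠ j' → ∫ ω, (if X j ω = Y j ω then (1:ℝ) else 0)
      * (if X j' ω = Y j' ω then (1:ℝ) else 0) ∂P = Pb * Pb := by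
    intro j j' hne
    have hcomp : IndepFun (fun ω => if X j ω = Y j ω then (1:ℝ) else 0)
        (fun ω => if X j' ω = Y j' ω then (1:ℝ) else 0) P :=
      (hpairs_indep.indepFun hne).comp
        (φ := fun q : Fin (2^b) × Fin (2^b) => if q.1 = q.2 then (1:ℝ) else 0)
        (ψ := fun q : Fin (2^b) × Fin (2^b) => if q.1 = q.2 then (1:ℝ) else 0)
        (measurable_of_countable _) (measurable_of_countable _)
    have e : ∫ ω, (if X j ω = Y j ω then (1:ℝ) else 0)
        * (if X j' ω = Y j' ω then (1:ℝ) else 0) ∂P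
        = (∫ ω, (if X j ω = Y j ω then (1:ℝ) else 0) ∂P)
          * ∫ ω, (if X j' ω = Y j' ω then (1:ℝ) else 0) ∂P :=
      hcomp.integral_mul_eq_mul_integral (hXiMeas j).aestronglyMeasurable (hXiMeas j').aestronglyMeasurable
    rw [e, hXiInt j, hXiInt j']
  -- first and second moment of the number of collisions
  have hMint : ∫ ω, (∑ j : Fin k, if X j ω = Y j ω then (1:ℝ) else 0) ∂P = k * Pb := by
    rw [integral_finset_sum _ fun j _ => hXiIntg j]
    simp [hXiInt]
  have hM2 : ∫ ω, (∑ j : Fin k, if X j ω = Y j ω then (1:ℝ) else 0)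
      * (∑ j : Fin k, if X j ω = Y j ω then (1:ℝ) else 0) ∂P
      = k * Pb + ((k:ℝ)^2 - k) * (Pb * Pb) := by
    have hexp : ∀ ω, (∑ j : Fin k, if X j ω = Y j ω then (1:ℝ) else 0)
        * (∑ j : Fin k, if X j ω = Y j ω then (1:ℝ) else 0)
        = ∑ j : Fin k, ∑ j' : Fin k, (if X j ω = Y j ω then (1:ℝ) else 0)
          * (if X j' ω = Y j' ω then (1:ℝ) else 0) := fun ω => Finset.sum_mul_sum _ _ _ _
    rw [show (fun ω => (∑ j : Fin k, if X j ω = Y j ω then (1:ℝ) else 0)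
        * (∑ j : Fin k, if X j ω = Y j ω then (1:ℝ) else 0))
        = fun ω => ∑ j : Fin k, ∑ j' : Fin k, (if X j ω = Y j ω then (1:ℝ) else 0)
          * (if X j' ω = Y j' ω then (1:ℝ) else 0) from funext hexp]
    rw [integral_finset_sum _ fun j _ => integrable_finset_sum _ fun j' _ =>
      hBddInt (fun ω => (if X j ω = Y j ω then (1:ℝ) else 0) * (if X j' ω = Y j' ω then (1:ℝ) else 0)) 1 ((hXiMeas j).mul (hXiMeas j'))
        (Filter.Eventually.of_forall fun ω => by rw [abs_mul]; split_ifs <;> norm_num)]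
    have hterm : ∀ j : Fin k, (∫ ω, ∑ j' : Fin k, (if X j ω = Y j ω then (1:ℝ) else 0)
        * (if X j' ω = Y j' ω then (1:ℝ) else 0) ∂P)
        = Pb + ((k:ℝ) - 1) * (Pb * Pb) := by
      intro j
      rw [integral_finset_sum _ fun j' _ => hBddInt (fun ω => (if X j ω = Y j ω then (1:ℝ) else 0) * (if X j' ω = Y j' ω then (1:ℝ) else 0)) 1 ((hXiMeas j).mul (hXiMeas j'))
        (Filter.Eventually.of_forall fun ω => by rw [abs_mul]; split_ifs <;> norm_num)]
      have : ∀ j' : Fin k, ∫ ω, (if X j ω = Y j ω then (1:ℝ) else 0)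
          * (if X j' ω = Y j' ω then (1:ℝ) else 0) ∂P
          = Pb * Pb + (if j = j' then Pb - Pb * Pb else 0) := by
        intro j'
        by_cases hjj : j = j'
        · subst hjj
          rw [if_pos rfl]
          have hsq : ∫ ω, (if X j ω = Y j ω then (1:ℝ) else 0)
              * (if X j ω = Y j ω then (1:ℝ) else 0) ∂P
              = ∫ ω, (if X j ω = Y j ω then (1:ℝ) else 0) ∂P := by
            refine integral_congr_ae (Filter.Eventually.of_forall fun ω => ?_)
            by_cases hxy : X j ω = Y j ω <;> simp [hxy]
          rw [hsq, hXiInt j]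
          ring
        · rw [if_neg hjj, hXiXj j j' hjj]
          ring
      rw [Finset.sum_congr rfl fun j' _ => this j']
      rw [Finset.sum_add_distrib, Finset.sum_const, Finset.sum_ite_eq]
      simp [Finset.card_univ]
      ring
    rw [Finset.sum_congr rfl fun j _ => hterm j, Finset.sum_const, Finset.card_univ,
      Fintype.card_fin, nsmul_eq_mul]
    ring
  -- mean: per-term evaluation
  have hmean_term : ∀ p : (Fin k × Fin (2^b)) × (Fin k × Fin (2^b)),
      ∫ ω, tF X Y h r p ω ∂P
        = if p.1 = p.2 then ∫ ω, aF X p.1 ω * aF Y p.1 ω ∂P else 0 := by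
    intro p
    obtain ⟨i1, i1'⟩ := p
    simp only
    have hfact : ∫ ω, tF X Y h r (i1, i1') ω ∂P
        = (∫ ω, dF h i1 i1' ω ∂P) * ((∫ ω, r i1 ω * r i1' ω ∂P)
          * (∫ ω, aF X i1 ω * aF Y i1' ω ∂P)) := by
      have hmain := factor3 (fun v => if v i1 = v i1' then (1:ℝ) else 0)
        (fun u => u i1 * u i1')
        (fun w => (if (w i1.1).1 = i1.2 then (1:ℝ) else 0)
          * (if (w i1'.1).2 = i1'.2 then 1 else 0))
        ((measurable_pi_apply i1).mul (measurable_pi_apply i1'))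
      refine Eq.trans ?_ hmain
      refine integral_congr_ae (Filter.Eventually.of_forall fun ω => ?_)
      unfold tF aF dF
      ring
    by_cases hpp : i1 = i1'
    · subst hpp
      rw [if_pos rfl, hfact]
      have hd : ∫ ω, dF h i1 i1 ω ∂P = 1 := by
        have : ∀ ω, dF h i1 i1 ω = 1 := fun ω => by unfold dF; simp
        rw [show (fun ω => dF h i1 i1 ω) = fun _ => (1:ℝ) from funext this]
        simp
      have hrr : ∫ ω, r i1 ω * r i1 ω ∂P = 1 := by
        have : ∀ᵐ ω ∂P, r i1 ω * r i1 ω = 1 := by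
          filter_upwards [hrae i1] with ω hω
          rcases hω with hh|hh <;> rw [hh] <;> norm_num
        rw [integral_congr_ae this]
        simp
      rw [hd, hrr]
      ring
    · rw [if_neg hpp, hfact, hr_zero2 i1 i1' hpp]
      ring
  have hmean : ∫ ω, (∑ j, oneHotSketch X h r j ω * oneHotSketch Y h r j ω) ∂P = k * Pb := by
    rw [show (fun ω => (∑ j, oneHotSketch X h r j ω * oneHotSketch Y h r j ω))
        = fun ω => ∑ p : (Fin k × Fin (2^b)) × (Fin k × Fin (2^b)), tF X Y h r p ω
        from funext (sketch_expand X Y h r)]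
    rw [integral_finset_sum _ fun p _ => hTint p]
    rw [Finset.sum_congr rfl fun p _ => hmean_term p]
    rw [Fintype.sum_prod_type]
    have hred : ∀ i1 : Fin k × Fin (2^b),
        (∑ i1' : Fin k × Fin (2^b), if i1 = i1' then ∫ ω, aF X i1 ω * aF Y i1 ω ∂P else 0)
        = ∫ ω, aF X i1 ω * aF Y i1 ω ∂P := by
      intro i1
      rw [Finset.sum_ite_eq]
      simp
    rw [Finset.sum_congr rfl fun i1 _ => hred i1]
    rw [← integral_finset_sum _ fun i _ => hACint i i]
    have : ∀ ω, (∑ i : Fin k × Fin (2^b), aF X i ω * aF Y i ω)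
        = ∑ j : Fin k, (if X j ω = Y j ω then (1:ℝ) else 0) := fun ω => sum_aF_mul X Y ω
    rw [show (fun ω => ∑ i : Fin k × Fin (2^b), aF X i ω * aF Y i ω)
        = fun ω => ∑ j : Fin k, (if X j ω = Y j ω then (1:ℝ) else 0) from funext this]
    exact hMint
  -- second moment: per-quadruple evaluation
  have hquad : ∀ i1 i1' i2 i2' : Fin k × Fin (2^b),
      ∫ ω, tF X Y h r (i1, i1') ω * tF X Y h r (i2, i2') ω ∂P
        = (if i1 = i1' ∧ i2 = i2'
            then ∫ ω, aF X i1 ω * aF Y i1' ω * (aF X i2 ω * aF Y i2' ω) ∂P else 0)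
          + ((if i1 = i2 ∧ i1' = i2' ∧ ¬ i1 = i1'
            then (∫ ω, aF X i1 ω * aF Y i1' ω * (aF X i2 ω * aF Y i2' ω) ∂P) / B else 0)
          + (if i1 = i2' ∧ i1' = i2 ∧ ¬ i1 = i1'
            then (∫ ω, aF X i1 ω * aF Y i1' ω * (aF X i2 ω * aF Y i2' ω) ∂P) / B else 0)) := by
    intro i1 i1' i2 i2'
    have hfact : ∫ ω, tF X Y h r (i1, i1') ω * tF X Y h r (i2, i2') ω ∂P
        = (∫ ω, dF h i1 i1' ω * dF h i2 i2' ω ∂P)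
          * ((∫ ω, r i1 ω * r i1' ω * (r i2 ω * r i2' ω) ∂P)
          * (∫ ω, aF X i1 ω * aF Y i1' ω * (aF X i2 ω * aF Y i2' ω) ∂P)) := by
      have hmain := factor3
        (fun v => (if v i1 = v i1' then (1:ℝ) else 0) * (if v i2 = v i2' then 1 else 0))
        (fun u => u i1 * u i1' * (u i2 * u i2'))
        (fun w => (if (w i1.1).1 = i1.2 then (1:ℝ) else 0)
          * (if (w i1'.1).2 = i1'.2 then 1 else 0)
          * ((if (w i2.1).1 = i2.2 then (1:ℝ) else 0)
          * (if (w i2'.1).2 = i2'.2 then 1 else 0)))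
        (((measurable_pi_apply i1).mul (measurable_pi_apply i1')).mul
          ((measurable_pi_apply i2).mul (measurable_pi_apply i2')))
      refine Eq.trans ?_ hmain
      refine integral_congr_ae (Filter.Eventually.of_forall fun ω => ?_)
      unfold tF aF dF
      ring
    by_cases hA : i1 = i1' ∧ i2 = i2'
    · obtain ⟨h1, h2⟩ := hA
      rw [if_pos ⟨h1, h2⟩, if_neg (fun hc => hc.2.2 h1), if_neg (fun hc => hc.2.2 h1), hfact]
      subst h1; subst h2
      have hd : ∫ ω, dF h i1 i1 ω * dF h i2 i2 ω ∂P = 1 := by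
        have : ∀ ω, dF h i1 i1 ω * dF h i2 i2 ω = 1 := fun ω => by unfold dF; simp
        rw [show (fun ω => dF h i1 i1 ω * dF h i2 i2 ω) = fun _ => (1:ℝ) from funext this]
        simp
      rw [hd, hr_one i1 i2]
      ring
    · by_cases hBc : i1 = i2 ∧ i1' = i2' ∧ ¬ i1 = i1'
      · obtain ⟨h1, h2, hne⟩ := hBc
        rw [if_neg hA, if_pos ⟨h1, h2, hne⟩, if_neg (fun hc => hne (h1.trans hc.2.1.symm))]
        subst h1
        subst h2
        rw [hfact]
        have hd : ∫ ω, dF h i1 i1' ω * dF h i1 i1' ω ∂P = (B:ℝ)⁻¹ := by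
          have : ∀ ω, dF h i1 i1' ω * dF h i1 i1' ω = dF h i1 i1' ω := fun ω => by
            unfold dF; split_ifs <;> norm_num
          rw [show (fun ω => dF h i1 i1' ω * dF h i1 i1' ω) = fun ω => dF h i1 i1' ω
            from funext this]
          exact hD1 i1 i1' hne
        rw [hd, hr_one2 i1 i1']
        field_simp
        ring
      · by_cases hCc : i1 = i2' ∧ i1' = i2 ∧ ¬ i1 = i1'
        · obtain ⟨h1, h2, hne⟩ := hCc
          rw [if_neg hA, if_neg hBc, if_pos ⟨h1, h2, hne⟩]
          subst h1
          subst h2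
          rw [hfact]
          have hd : ∫ ω, dF h i1 i1' ω * dF h i1' i1 ω ∂P = (B:ℝ)⁻¹ := by
            have : ∀ ω, dF h i1 i1' ω * dF h i1' i1 ω = dF h i1 i1' ω := fun ω => by
              unfold dF
              by_cases hh : h i1 ω = h i1' ω
              · rw [if_pos hh, if_pos hh.symm]; norm_num
              · rw [if_neg hh, if_neg (fun hc => hh hc.symm)]; norm_num
            rw [show (fun ω => dF h i1 i1' ω * dF h i1' i1 ω) = fun ω => dF h i1 i1' ω
              from funext this]
            exact hD1 i1 i1' hne
          rw [hd, hr_one3 i1 i1']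
          field_simp
          ring
        · rw [if_neg hA, if_neg hBc, if_neg hCc, hfact]
          have hnot : ¬((i1 = i1' ∧ i2 = i2') ∨ (i1 = i2 ∧ i1' = i2')
              ∨ (i1 = i2' ∧ i1' = i2)) := by
            rintro (hc | hc | hc)
            · exact hA hc
            · by_cases h11 : i1 = i1'
              · exact hA ⟨h11, hc.1.symm.trans (h11.trans hc.2)⟩
              · exact hBc ⟨hc.1, hc.2, h11⟩
            · by_cases h11 : i1 = i1'
              · exact hA ⟨h11, hc.2.symm.trans (h11.symm ▸ hc.1 : i1' = i2')⟩
              · exact hCc ⟨hc.1, hc.2, h11⟩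
          rw [hodd i1 i1' i2 i2' hnot]
          ring
  -- expand the second moment
  have hsq : ∫ ω, (∑ j, oneHotSketch X h r j ω * oneHotSketch Y h r j ω)
      * (∑ j, oneHotSketch X h r j ω * oneHotSketch Y h r j ω) ∂P
      = ∑ i1 : Fin k × Fin (2^b), ∑ i1' : Fin k × Fin (2^b),
        ∑ i2 : Fin k × Fin (2^b), ∑ i2' : Fin k × Fin (2^b),
          ∫ ω, tF X Y h r (i1, i1') ω * tF X Y h r (i2, i2') ω ∂P := by
    rw [show (fun ω => (∑ j, oneHotSketch X h r j ω * oneHotSketch Y h r j ω)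
        * (∑ j, oneHotSketch X h r j ω * oneHotSketch Y h r j ω))
        = fun ω => ∑ p : (Fin k × Fin (2^b)) × (Fin k × Fin (2^b)),
            ∑ q : (Fin k × Fin (2^b)) × (Fin k × Fin (2^b)),
              tF X Y h r p ω * tF X Y h r q ω
        from funext fun ω => by rw [sketch_expand X Y h r ω, Finset.sum_mul_sum]]
    rw [integral_finset_sum _ fun p _ => integrable_finset_sum _ fun q _ => hTTint p q]
    rw [Finset.sum_congr rfl fun p _ => integral_finset_sum _ fun q _ => hTTint p q]
    rw [Fintype.sum_prod_type]
    refine Finset.sum_congr rfl fun i1 _ => Finset.sum_congr rfl fun i1' _ => ?_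
    rw [Fintype.sum_prod_type]
  have hsplit : (∑ i1 : Fin k × Fin (2^b), ∑ i1' : Fin k × Fin (2^b),
        ∑ i2 : Fin k × Fin (2^b), ∑ i2' : Fin k × Fin (2^b),
          ∫ ω, tF X Y h r (i1, i1') ω * tF X Y h r (i2, i2') ω ∂P)
      = (∑ i1 : Fin k × Fin (2^b), ∑ i2 : Fin k × Fin (2^b),
          ∫ ω, aF X i1 ω * aF Y i1 ω * (aF X i2 ω * aF Y i2 ω) ∂P)
        + ((∑ i1 : Fin k × Fin (2^b), ∑ i1' : Fin k × Fin (2^b), if ¬ i1 = i1'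
            then (∫ ω, aF X i1 ω * aF Y i1' ω * (aF X i1 ω * aF Y i1' ω) ∂P) / B else 0)
        + (∑ i1 : Fin k × Fin (2^b), ∑ i1' : Fin k × Fin (2^b), if ¬ i1 = i1'
            then (∫ ω, aF X i1 ω * aF Y i1' ω * (aF X i1' ω * aF Y i1 ω) ∂P) / B else 0)) := by
    rw [Finset.sum_congr rfl fun i1 _ => Finset.sum_congr rfl fun i1' _ =>
      Finset.sum_congr rfl fun i2 _ => Finset.sum_congr rfl fun i2' _ =>
        hquad i1 i1' i2 i2']
    simp only [ite_and, my_sum_ite_const, Finset.sum_ite_eq, Finset.mem_univ, if_true,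
      Finset.sum_add_distrib]
  -- evaluate the three sums
  have eqA : (∑ i1 : Fin k × Fin (2^b), ∑ i2 : Fin k × Fin (2^b),
      ∫ ω, aF X i1 ω * aF Y i1 ω * (aF X i2 ω * aF Y i2 ω) ∂P)
      = k * Pb + ((k:ℝ)^2 - k) * (Pb * Pb) := by
    rw [Finset.sum_congr rfl fun i1 _ =>
      (integral_finset_sum _ fun i2 _ => hACACint i1 i1 i2 i2).symm]
    rw [← integral_finset_sum _ fun i1 _ =>
      integrable_finset_sum _ fun i2 _ => hACACint i1 i1 i2 i2]
    have hpt : ∀ ω, (∑ i1 : Fin k × Fin (2^b), ∑ i2 : Fin k × Fin (2^b),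
        aF X i1 ω * aF Y i1 ω * (aF X i2 ω * aF Y i2 ω))
        = (∑ j : Fin k, if X j ω = Y j ω then (1:ℝ) else 0)
          * (∑ j : Fin k, if X j ω = Y j ω then (1:ℝ) else 0) := by
      intro ω
      rw [← Finset.sum_mul_sum, sum_aF_mul]
    rw [show (fun ω => ∑ i1 : Fin k × Fin (2^b), ∑ i2 : Fin k × Fin (2^b),
        aF X i1 ω * aF Y i1 ω * (aF X i2 ω * aF Y i2 ω))
        = fun ω => (∑ j : Fin k, if X j ω = Y j ω then (1:ℝ) else 0)
          * (∑ j : Fin k, if X j ω = Y j ω then (1:ℝ) else 0) from funext hpt]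
    exact hM2
  -- idempotence of the indicator products
  have hidem : ∀ i1 i1' : Fin k × Fin (2^b),
      ∫ ω, aF X i1 ω * aF Y i1' ω * (aF X i1 ω * aF Y i1' ω) ∂P
        = ∫ ω, aF X i1 ω * aF Y i1' ω ∂P := by
    intro i1 i1'
    refine integral_congr_ae (Filter.Eventually.of_forall fun ω => ?_)
    show aF X i1 ω * aF Y i1' ω * (aF X i1 ω * aF Y i1' ω) = aF X i1 ω * aF Y i1' ω
    unfold aF
    split_ifs <;> norm_num
  have hswap : ∀ i1 i1' : Fin k × Fin (2^b),
      ∫ ω, aF X i1 ω * aF Y i1' ω * (aF X i1' ω * aF Y i1 ω) ∂P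
        = ∫ ω, aF X i1 ω * aF Y i1 ω * (aF X i1' ω * aF Y i1' ω) ∂P := by
    intro i1 i1'
    refine integral_congr_ae (Filter.Eventually.of_forall fun ω => ?_)
    show aF X i1 ω * aF Y i1' ω * (aF X i1' ω * aF Y i1 ω)
      = aF X i1 ω * aF Y i1 ω * (aF X i1' ω * aF Y i1' ω)
    ring
  have eqB : (∑ i1 : Fin k × Fin (2^b), ∑ i1' : Fin k × Fin (2^b), if ¬ i1 = i1'
      then (∫ ω, aF X i1 ω * aF Y i1' ω * (aF X i1 ω * aF Y i1' ω) ∂P) / B else 0)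
      = (k:ℝ)^2 / B - (k * Pb) / B := by
    have e1 : ∀ i1 i1' : Fin k × Fin (2^b),
        (if ¬ i1 = i1' then (∫ ω, aF X i1 ω * aF Y i1' ω * (aF X i1 ω * aF Y i1' ω) ∂P) / B else 0)
        = (∫ ω, aF X i1 ω * aF Y i1' ω ∂P) / B
          - (if i1 = i1' then (∫ ω, aF X i1 ω * aF Y i1' ω ∂P) / B else 0) := by
      intro i1 i1'
      rw [hidem i1 i1', my_ite_not_eq]
    rw [Finset.sum_congr rfl fun i1 _ => Finset.sum_congr rfl fun i1' _ => e1 i1 i1']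
    simp only [Finset.sum_sub_distrib, Finset.sum_ite_eq, Finset.mem_univ, if_true]
    have hall : (∑ i1 : Fin k × Fin (2^b), ∑ i1' : Fin k × Fin (2^b),
        (∫ ω, aF X i1 ω * aF Y i1' ω ∂P) / B)
        = (k:ℝ)^2 / B := by
      have : (∑ i1 : Fin k × Fin (2^b), ∑ i1' : Fin k × Fin (2^b),
          (∫ ω, aF X i1 ω * aF Y i1' ω ∂P))
          = (k:ℝ)^2 := by
        rw [Finset.sum_congr rfl fun i1 _ =>
          (integral_finset_sum _ fun i1' _ => hACint i1 i1').symm]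
        rw [← integral_finset_sum _ fun i1 _ =>
          integrable_finset_sum _ fun i1' _ => hACint i1 i1']
        have hpt : ∀ ω, (∑ i1 : Fin k × Fin (2^b), ∑ i1' : Fin k × Fin (2^b),
            aF X i1 ω * aF Y i1' ω) = (k:ℝ)^2 := by
          intro ω
          rw [← Finset.sum_mul_sum, sum_aF, sum_aF]
          ring
        rw [show (fun ω => ∑ i1 : Fin k × Fin (2^b), ∑ i1' : Fin k × Fin (2^b),
            aF X i1 ω * aF Y i1' ω) = fun _ => (k:ℝ)^2 from funext hpt]
        simp
      rw [← this, Finset.sum_div]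
      exact Finset.sum_congr rfl fun i1 _ => by rw [Finset.sum_div]
    have hdiag : (∑ i1 : Fin k × Fin (2^b), (∫ ω, aF X i1 ω * aF Y i1 ω ∂P) / B)
        = (k * Pb) / B := by
      rw [← Finset.sum_div]
      congr 1
      rw [← integral_finset_sum _ fun i _ => hACint i i]
      rw [show (fun ω => ∑ i : Fin k × Fin (2^b), aF X i ω * aF Y i ω)
          = fun ω => ∑ j : Fin k, (if X j ω = Y j ω then (1:ℝ) else 0)
          from funext fun ω => sum_aF_mul X Y ω]
      exact hMint
    rw [hall, hdiag]
  have eqC : (∑ i1 : Fin k × Fin (2^b), ∑ i1' : Fin k × Fin (2^b), if ¬ i1 = i1'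
      then (∫ ω, aF X i1 ω * aF Y i1' ω * (aF X i1' ω * aF Y i1 ω) ∂P) / B else 0)
      = (k * Pb + ((k:ℝ)^2 - k) * (Pb * Pb)) / B - (k * Pb) / B := by
    have e1 : ∀ i1 i1' : Fin k × Fin (2^b),
        (if ¬ i1 = i1' then (∫ ω, aF X i1 ω * aF Y i1' ω * (aF X i1' ω * aF Y i1 ω) ∂P) / B else 0)
        = (∫ ω, aF X i1 ω * aF Y i1 ω * (aF X i1' ω * aF Y i1' ω) ∂P) / B
          - (if i1 = i1' then (∫ ω, aF X i1 ω * aF Y i1 ω * (aF X i1' ω * aF Y i1' ω) ∂P) / B else 0) := by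
      intro i1 i1'
      rw [hswap i1 i1', my_ite_not_eq]
    rw [Finset.sum_congr rfl fun i1 _ => Finset.sum_congr rfl fun i1' _ => e1 i1 i1']
    simp only [Finset.sum_sub_distrib, Finset.sum_ite_eq, Finset.mem_univ, if_true]
    have hall : (∑ i1 : Fin k × Fin (2^b), ∑ i1' : Fin k × Fin (2^b),
        (∫ ω, aF X i1 ω * aF Y i1 ω * (aF X i1' ω * aF Y i1' ω) ∂P) / B)
        = (k * Pb + ((k:ℝ)^2 - k) * (Pb * Pb)) / B := by
      rw [← eqA, Finset.sum_congr rfl fun i1 _ => (Finset.sum_div _ _ _).symm, ← Finset.sum_div]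
    have hdiag : (∑ i1 : Fin k × Fin (2^b),
        (∫ ω, aF X i1 ω * aF Y i1 ω * (aF X i1 ω * aF Y i1 ω) ∂P) / B)
        = (k * Pb) / B := by
      rw [Finset.sum_congr rfl fun i1 _ => by rw [hidem i1 i1]]
      rw [← Finset.sum_div]
      congr 1
      rw [← integral_finset_sum _ fun i _ => hACint i i]
      rw [show (fun ω => ∑ i : Fin k × Fin (2^b), aF X i ω * aF Y i ω)
          = fun ω => ∑ j : Fin k, (if X j ω = Y j ω then (1:ℝ) else 0)
          from funext fun ω => sum_aF_mul X Y ω]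
      exact hMint
    rw [hall, hdiag]
  have hsecond : ∫ ω, (∑ j, oneHotSketch X h r j ω * oneHotSketch Y h r j ω)
      * (∑ j, oneHotSketch X h r j ω * oneHotSketch Y h r j ω) ∂P
      = (k * Pb + ((k:ℝ)^2 - k) * (Pb * Pb))
        + (((k:ℝ)^2 / B - (k * Pb) / B)
        + ((k * Pb + ((k:ℝ)^2 - k) * (Pb * Pb)) / B - (k * Pb) / B)) := by
    rw [hsq, hsplit, eqA, eqB, eqC]
  -- the sketch inner product is bounded and measurable
  have hmS : Measurable (fun ω => ∑ j, oneHotSketch X h r j ω * oneHotSketch Y h r j ω) := by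
    rw [show (fun ω => ∑ j, oneHotSketch X h r j ω * oneHotSketch Y h r j ω)
        = fun ω => ∑ p : (Fin k × Fin (2^b)) × (Fin k × Fin (2^b)), tF X Y h r p ω
        from funext (sketch_expand X Y h r)]
    exact Finset.measurable_sum _ fun p _ => hmT p
  have hboundS : ∀ᵐ ω ∂P, ‖(fun ω => ∑ j, oneHotSketch X h r j ω * oneHotSketch Y h r j ω) ω‖
      ≤ (Fintype.card ((Fin k × Fin (2^b)) × (Fin k × Fin (2^b))) : ℝ) := by
    filter_upwards [hrae_all] with ω hω
    simp only [Real.norm_eq_abs]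
    rw [sketch_expand X Y h r ω]
    calc |∑ p : (Fin k × Fin (2^b)) × (Fin k × Fin (2^b)), tF X Y h r p ω|
        ≤ ∑ p : (Fin k × Fin (2^b)) × (Fin k × Fin (2^b)), |tF X Y h r p ω| :=
          Finset.abs_sum_le_sum_abs _ _
      _ ≤ ∑ _p : (Fin k × Fin (2^b)) × (Fin k × Fin (2^b)), (1:ℝ) := by
          refine Finset.sum_le_sum fun p _ => ?_
          have hr1 : |r p.1 ω| = 1 := by rcases hω p.1 with hh|hh <;> simp [hh]
          have hr2 : |r p.2 ω| = 1 := by rcases hω p.2 with hh|hh <;> simp [hh]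
          have key : |tF X Y h r p ω|
              = |aF X p.1 ω| * |aF Y p.2 ω| * (|r p.1 ω| * |r p.2 ω|) * |dF h p.1 p.2 ω| := by
            unfold tF; rw [abs_mul, abs_mul, abs_mul, abs_mul]
          rw [key, hr1, hr2]
          unfold aF dF
          split_ifs <;> norm_num
      _ = (Fintype.card ((Fin k × Fin (2^b)) × (Fin k × Fin (2^b))) : ℝ) := by
          rw [Finset.sum_const, Finset.card_univ, nsmul_eq_mul, mul_one]
  have hmemp : MemLp (fun ω => ∑ j, oneHotSketch X h r j ω * oneHotSketch Y h r j ω) 2 P :=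
    MemLp.of_bound hmS.aestronglyMeasurable _ hboundS
  refine ⟨hmean, ?_⟩
  rw [variance_eq_sub hmemp]
  have hsq_pt : (P[(fun ω => ∑ j, oneHotSketch X h r j ω * oneHotSketch Y h r j ω) ^ 2])
      = ∫ ω, (∑ j, oneHotSketch X h r j ω * oneHotSketch Y h r j ω)
        * (∑ j, oneHotSketch X h r j ω * oneHotSketch Y h r j ω) ∂P := by
    refine integral_congr_ae (Filter.Eventually.of_forall fun ω => ?_)
    simp [pow_two]
  rw [hsq_pt, hsecond]
  have hmean' : (P[fun ω => ∑ j, oneHotSketch X h r j ω * oneHotSketch Y h r j ω]) = k * Pb :=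
    hmean
  rw [hmean']
  field_simp
  ring
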